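/- arXiv:0908.4241 — 2 statements merged into one kernel-verified Lean document; each statement's English description precedes it below -/
import Mathlib

section
/- Let r ≥ 0, let R = MvPowerSeries (Fin r) ℂ be the ring of formal power series in r variables over ℂ, and let m ⊂ R be the ideal of power series with zero constant coefficient. Let b, c ∈ m and let U be a unit of the power series ring R[[t]]. Then U·(t² + b·t + c) is the square of an element of R[[t]] if and only if b² − 4c = 0. -/
open scoped Classical

namespace Stmt5Aux

open MvPowerSeries

variable {σ S : Type*} [CommRing S]

lemma degree_add' (a b : σ →₀ ℕ) :
    Finsupp.degree (a + b) = Finsupp.degree a + Finsupp.degree b := by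
  simp only [Finsupp.degree_eq_weight_one]
  exact map_add _ a b

/-- The ideal of power series whose coefficients vanish in degrees `< N`. -/
def lowZero (σ S : Type*) [CommRing S] (N : ℕ) : Ideal (MvPowerSeries σ S) where
  carrier := {f | ∀ d : σ →₀ ℕ, Finsupp.degree d < N → MvPowerSeries.coeff d f = 0}
  zero_mem' := by intro d _; simp
  add_mem' := by
    intro f g hf hg d hd
    simp [map_add, hf d hd, hg d hd]
  smul_mem' := by
    intro r f hf d hd
    rw [smul_eq_mul, MvPowerSeries.coeff_mul]
    apply Finset.sum_eq_zero
    rintro ⟨p, q⟩ hpq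
    rw [Finset.HasAntidiagonal.mem_antidiagonal] at hpq
    have hq : Finsupp.degree q < N := by
      have h := degree_add' p q
      rw [hpq] at h
      omega
    rw [hf q hq, mul_zero]

lemma mem_lowZero_of_pow {f : MvPowerSeries σ S}
    (hf : MvPowerSeries.constantCoeff f = 0) (N : ℕ) :
    f ^ N ∈ lowZero σ S N := by
  induction N with
  | zero => intro d hd; omega
  | succ n ih =>
      intro d hd
      rw [pow_succ, MvPowerSeries.coeff_mul]
      apply Finset.sum_eq_zero
      rintro ⟨p, q⟩ hpq
      rw [Finset.HasAntidiagonal.mem_antidiagonal] at hpq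
      have hdeg : Finsupp.degree p + Finsupp.degree q < n + 1 := by
        have h := degree_add' p q
        rw [hpq] at h
        omega
      by_cases hp : Finsupp.degree p < n
      · rw [ih p hp, zero_mul]
      · have hq0 : Finsupp.degree q = 0 := by omega
        rw [Finsupp.degree_eq_zero_iff] at hq0
        subst hq0
        rw [MvPowerSeries.coeff_zero_eq_constantCoeff_apply, hf, mul_zero]

lemma eq_zero_of_forall_lowZero {f : MvPowerSeries σ S}
    (h : ∀ N, f ∈ lowZero σ S (N + 2)) : f = 0 := by
  ext d
  simpa using h (Finsupp.degree d) d (by omega)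

/-- Evaluation of a power series at a nilpotent element, as a ring hom. -/
noncomputable def evalNil {R A : Type*} [CommRing R] [CommRing A]
    (φ : R →+* A) (a : A) (M : ℕ) (hM : a ^ M = 0) (h1 : 1 ≤ M) :
    PowerSeries R →+* A where
  toFun f := ∑ n ∈ Finset.range M, φ (PowerSeries.coeff n f) * a ^ n
  map_zero' := by simp
  map_one' := by
    show (∑ n ∈ Finset.range M, φ (PowerSeries.coeff n 1) * a ^ n) = 1
    rw [Finset.sum_eq_single 0]
    · simp
    · intro n _ hn
      rw [PowerSeries.coeff_one, if_neg hn]; simp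
    · intro h; exact absurd (Finset.mem_range.2 h1) h
  map_add' f g := by
    simp [map_add, add_mul, Finset.sum_add_distrib]
  map_mul' f g := by
    show (∑ n ∈ Finset.range M, φ (PowerSeries.coeff n (f * g)) * a ^ n)
        = (∑ n ∈ Finset.range M, φ (PowerSeries.coeff n f) * a ^ n) *
          (∑ n ∈ Finset.range M, φ (PowerSeries.coeff n g) * a ^ n)
    have key : ∀ i j : ℕ, M ≤ i + j →
        φ (PowerSeries.coeff i f) * φ (PowerSeries.coeff j g) * a ^ (i + j) = 0 := by
      intro i j hij
      have : a ^ (i + j) = 0 := by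
        obtain ⟨k, hk⟩ := Nat.exists_eq_add_of_le hij
        rw [hk, pow_add, hM, zero_mul]
      rw [this, mul_zero]
    rw [Finset.sum_mul_sum]
    have lhs : ∑ n ∈ Finset.range M, φ (PowerSeries.coeff n (f * g)) * a ^ n
        = ∑ p ∈ (Finset.range M ×ˢ Finset.range M).filter (fun p => p.1 + p.2 < M),
            φ (PowerSeries.coeff p.1 f) * φ (PowerSeries.coeff p.2 g) * a ^ (p.1 + p.2) := by
      have : ∀ n ∈ Finset.range M, φ (PowerSeries.coeff n (f * g)) * a ^ n
          = ∑ p ∈ Finset.HasAntidiagonal.antidiagonal n,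
              φ (PowerSeries.coeff p.1 f) * φ (PowerSeries.coeff p.2 g) * a ^ (p.1 + p.2) := by
        intro n _
        rw [PowerSeries.coeff_mul, map_sum, Finset.sum_mul]
        apply Finset.sum_congr rfl
        intro p hp
        rw [Finset.HasAntidiagonal.mem_antidiagonal] at hp
        rw [map_mul, hp]
      rw [Finset.sum_congr rfl this]
      rw [← Finset.sum_biUnion]
      · apply Finset.sum_congr _ (fun _ _ => rfl)
        ext p
        simp only [Finset.mem_biUnion, Finset.mem_range, Finset.HasAntidiagonal.mem_antidiagonal,
          Finset.mem_filter, Finset.mem_product]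
        constructor
        · rintro ⟨n, hn, rfl⟩
          omega
        · rintro ⟨⟨h1, h2⟩, h3⟩
          exact ⟨p.1 + p.2, h3, rfl⟩
      · intro x _ y _ hxy
        apply Finset.disjoint_left.2
        intro p hp hp'
        rw [Finset.HasAntidiagonal.mem_antidiagonal] at hp hp'
        exact hxy (hp ▸ hp')
    rw [lhs, Finset.sum_filter_of_ne]
    · rw [Finset.sum_product]
      apply Finset.sum_congr rfl
      intro i _
      apply Finset.sum_congr rfl
      intro j _
      rw [pow_add]; ring
    · intro p hp hne
      by_contra h
      exact hne (key p.1 p.2 (by omega))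

@[simp] lemma evalNil_apply {R A : Type*} [CommRing R] [CommRing A]
    (φ : R →+* A) (a : A) (M : ℕ) (hM : a ^ M = 0) (h1 : 1 ≤ M) (f : PowerSeries R) :
    evalNil φ a M hM h1 f = ∑ n ∈ Finset.range M, φ (PowerSeries.coeff n f) * a ^ n := rfl

lemma evalNil_C {R A : Type*} [CommRing R] [CommRing A]
    (φ : R →+* A) (a : A) (M : ℕ) (hM : a ^ M = 0) (h1 : 1 ≤ M) (r : R) :
    evalNil φ a M hM h1 (PowerSeries.C r) = φ r := by
  rw [evalNil_apply, Finset.sum_eq_single 0]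
  · simp
  · intro n _ hn
    rw [PowerSeries.coeff_C, if_neg hn]; simp
  · intro h; exact absurd (Finset.mem_range.2 h1) h

lemma evalNil_X {R A : Type*} [CommRing R] [CommRing A]
    (φ : R →+* A) (a : A) (M : ℕ) (hM : a ^ M = 0) (h1 : 1 ≤ M) (h2 : 2 ≤ M) :
    evalNil φ a M hM h1 PowerSeries.X = a := by
  rw [evalNil_apply, Finset.sum_eq_single 1]
  · simp
  · intro n _ hn
    rw [PowerSeries.coeff_X, if_neg hn]; simp
  · intro h; exact absurd (Finset.mem_range.2 h2) h

/-- Coefficients of a square root of a power series, defined recursively. -/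
noncomputable def sqrtFun (γ β : S) (u : MvPowerSeries σ S) : (σ →₀ ℕ) → S
  | d =>
    if hd : d = 0 then β
    else
      γ * (MvPowerSeries.coeff d u -
        ∑ p ∈ (Finset.HasAntidiagonal.antidiagonal d).attach,
          if h : p.1.1 ≠ 0 ∧ p.1.2 ≠ 0 then
            sqrtFun γ β u p.1.1 * sqrtFun γ β u p.1.2
          else 0)
  termination_by d => Finsupp.degree d
  decreasing_by
  all_goals
    (have hm := Finset.HasAntidiagonal.mem_antidiagonal.1 p.2
     have h1 : Finsupp.degree (p : (σ →₀ ℕ) × (σ →₀ ℕ)).1 +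
         Finsupp.degree (p : (σ →₀ ℕ) × (σ →₀ ℕ)).2 = Finsupp.degree d := by
       rw [← degree_add', hm]
     have e1 : Finsupp.degree (p : (σ →₀ ℕ) × (σ →₀ ℕ)).1 ≠ 0 :=
       fun h0 => h.1 ((Finsupp.degree_eq_zero_iff _).1 h0)
     have e2 : Finsupp.degree (p : (σ →₀ ℕ) × (σ →₀ ℕ)).2 ≠ 0 :=
       fun h0 => h.2 ((Finsupp.degree_eq_zero_iff _).1 h0)
     first
       | exact show Finsupp.degree (p : (σ →₀ ℕ) × (σ →₀ ℕ)).1 < Finsupp.degree d by omega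
       | exact show Finsupp.degree (p : (σ →₀ ℕ) × (σ →₀ ℕ)).2 < Finsupp.degree d by omega)

lemma sqrt_exists (u : MvPowerSeries σ S) (β : S)
    (hu : MvPowerSeries.constantCoeff u = β * β) (h2 : IsUnit (2 * β)) :
    ∃ w : MvPowerSeries σ S, w * w = u ∧ MvPowerSeries.constantCoeff w = β := by
  obtain ⟨v, hv⟩ := h2.exists_right_inv
  set w : MvPowerSeries σ S := fun d => sqrtFun v β u d with hwdef
  have hcoeff : ∀ d, MvPowerSeries.coeff d w = sqrtFun v β u d := fun d => rfl
  have hw0 : MvPowerSeries.coeff 0 w = β := by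
    rw [hcoeff, sqrtFun, dif_pos rfl]
  refine ⟨w, ?_, ?_⟩
  · ext d
    rw [MvPowerSeries.coeff_mul]
    by_cases hd : d = 0
    · subst hd
      rw [Finsupp.antidiagonal_zero, Finset.sum_singleton, hw0,
        MvPowerSeries.coeff_zero_eq_constantCoeff_apply, hu]
    · have hsplit := Finset.sum_filter_add_sum_filter_not (Finset.HasAntidiagonal.antidiagonal d)
        (fun p : (σ →₀ ℕ) × (σ →₀ ℕ) => p.1 ≠ 0 ∧ p.2 ≠ 0)
        (fun p => MvPowerSeries.coeff p.1 w * MvPowerSeries.coeff p.2 w)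
      rw [← hsplit]
      have hbd : (Finset.HasAntidiagonal.antidiagonal d).filter
          (fun p : (σ →₀ ℕ) × (σ →₀ ℕ) => ¬(p.1 ≠ 0 ∧ p.2 ≠ 0)) = {(0, d), (d, 0)} := by
        ext p
        simp only [Finset.mem_filter, Finset.HasAntidiagonal.mem_antidiagonal, Finset.mem_insert,
          Finset.mem_singleton, not_and_or, not_not]
        constructor
        · rintro ⟨hsum, h0 | h0⟩
          · left; rw [Prod.ext_iff]
            refine ⟨h0, ?_⟩
            rw [h0, zero_add] at hsum; exact hsum
          · right; rw [Prod.ext_iff]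
            refine ⟨?_, h0⟩
            rw [h0, add_zero] at hsum; exact hsum
        · rintro (rfl | rfl)
          · exact ⟨by simp, Or.inl rfl⟩
          · exact ⟨by simp, Or.inr rfl⟩
      have hne : ((0 : σ →₀ ℕ), d) ≠ (d, (0 : σ →₀ ℕ)) := by
        intro h
        rw [Prod.ext_iff] at h
        exact hd h.1.symm
      rw [hbd, Finset.sum_insert (by simp [hne]), Finset.sum_singleton]
      simp only [hw0]
      have hmid : (∑ p ∈ (Finset.HasAntidiagonal.antidiagonal d).attach,
          if h : p.1.1 ≠ 0 ∧ p.1.2 ≠ 0 then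
            sqrtFun v β u p.1.1 * sqrtFun v β u p.1.2
          else 0)
          = ∑ p ∈ (Finset.HasAntidiagonal.antidiagonal d).filter
              (fun p : (σ →₀ ℕ) × (σ →₀ ℕ) => p.1 ≠ 0 ∧ p.2 ≠ 0),
              MvPowerSeries.coeff p.1 w * MvPowerSeries.coeff p.2 w := by
        simp only [dite_eq_ite]
        rw [Finset.sum_attach (Finset.HasAntidiagonal.antidiagonal d)
          (fun p : (σ →₀ ℕ) × (σ →₀ ℕ) =>
            if p.1 ≠ 0 ∧ p.2 ≠ 0 then sqrtFun v β u p.1 * sqrtFun v β u p.2 else 0),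
          Finset.sum_filter]
        apply Finset.sum_congr rfl
        intro p _
        by_cases h : p.1 ≠ 0 ∧ p.2 ≠ 0 <;> simp [h, hcoeff]
      have hwd : MvPowerSeries.coeff d w
          = v * (MvPowerSeries.coeff d u -
              ∑ p ∈ (Finset.HasAntidiagonal.antidiagonal d).filter
                (fun p : (σ →₀ ℕ) × (σ →₀ ℕ) => p.1 ≠ 0 ∧ p.2 ≠ 0),
                MvPowerSeries.coeff p.1 w * MvPowerSeries.coeff p.2 w) := by
        rw [hcoeff, sqrtFun, dif_neg hd, hmid]
      rw [hwd]
      linear_combination (MvPowerSeries.coeff d u -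
        ∑ p ∈ (Finset.HasAntidiagonal.antidiagonal d).filter
          (fun p : (σ →₀ ℕ) × (σ →₀ ℕ) => p.1 ≠ 0 ∧ p.2 ≠ 0),
          MvPowerSeries.coeff p.1 w * MvPowerSeries.coeff p.2 w) * hv
  · exact hw0

set_option maxHeartbeats 2000000 in
lemma forward {σ : Type*} (b c : MvPowerSeries σ ℂ)
    (hb : MvPowerSeries.constantCoeff b = 0)
    (hc : MvPowerSeries.constantCoeff c = 0)
    (U : (PowerSeries (MvPowerSeries σ ℂ))ˣ)
    (V : PowerSeries (MvPowerSeries σ ℂ))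
    (hV : (U : PowerSeries (MvPowerSeries σ ℂ)) *
          (PowerSeries.X ^ 2 + PowerSeries.C b * PowerSeries.X + PowerSeries.C c)
          = V ^ 2) :
    b ^ 2 - 4 * c = 0 := by
  set half : MvPowerSeries σ ℂ := MvPowerSeries.C (2⁻¹ : ℂ) with hhalf
  have h2 : (2 : MvPowerSeries σ ℂ) * half = 1 := by
    rw [hhalf, show (2 : MvPowerSeries σ ℂ) = MvPowerSeries.C (2 : ℂ) from
      (map_ofNat _ 2).symm, ← map_mul]
    norm_num
  set τ : MvPowerSeries σ ℂ := -(half * b) with hτdef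
  have hccτ : MvPowerSeries.constantCoeff τ = 0 := by
    rw [hτdef, map_neg, map_mul, hb, mul_zero, neg_zero]
  set ρ : MvPowerSeries σ ℂ := τ * τ + b * τ + c with hρdef
  have hccρ : MvPowerSeries.constantCoeff ρ = 0 := by
    rw [hρdef, map_add, map_add, map_mul, map_mul, hccτ, hc]
    ring
  set Q : PowerSeries (MvPowerSeries σ ℂ) :=
    PowerSeries.X ^ 2 + PowerSeries.C b * PowerSeries.X + PowerSeries.C c with hQdef
  set D : Derivation (MvPowerSeries σ ℂ) (PowerSeries (MvPowerSeries σ ℂ))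
      (PowerSeries (MvPowerSeries σ ℂ)) := PowerSeries.derivative _ with hDdef
  have hDX : D PowerSeries.X = 1 := by rw [hDdef]; exact PowerSeries.derivative_X
  have hDC : ∀ s, D (PowerSeries.C s) = 0 := fun s => by
    rw [hDdef]; exact PowerSeries.derivative_C
  have hD2 : D (2 : PowerSeries (MvPowerSeries σ ℂ)) = 0 := by
    rw [show (2 : PowerSeries (MvPowerSeries σ ℂ))
      = PowerSeries.C (2 : MvPowerSeries σ ℂ) from (map_ofNat _ 2).symm]
    exact hDC _
  have hV' : (U : PowerSeries (MvPowerSeries σ ℂ)) * Q = V * V := by rw [hV]; ring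
  have hDQ : D Q = 2 * PowerSeries.X + PowerSeries.C b := by
    have hQ' : Q = PowerSeries.X * PowerSeries.X
        + PowerSeries.C b * PowerSeries.X + PowerSeries.C c := by rw [hQdef]; ring
    rw [hQ', map_add, map_add, Derivation.leibniz, Derivation.leibniz, hDX, hDC, hDC]
    simp only [smul_eq_mul]
    ring
  set W : PowerSeries (MvPowerSeries σ ℂ) := ↑(U⁻¹) with hWdef
  have hUW : (U : PowerSeries (MvPowerSeries σ ℂ)) * W = 1 := U.mul_inv
  set DU := D (U : PowerSeries (MvPowerSeries σ ℂ)) with hDUdef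
  set DV := D V with hDVdef
  have hder : 2 * (V * DV) = (U : PowerSeries (MvPowerSeries σ ℂ)) *
      (2 * PowerSeries.X + PowerSeries.C b) + Q * DU := by
    have h0 : D ((U : PowerSeries (MvPowerSeries σ ℂ)) * Q) = D (V * V) := by rw [hV']
    rw [Derivation.leibniz, Derivation.leibniz] at h0
    simp only [smul_eq_mul] at h0
    rw [hDQ] at h0
    linear_combination -h0
  set G : PowerSeries (MvPowerSeries σ ℂ) := W * (2 * DV - DU * W * V) with hGdef
  have hG : V * G = 2 * PowerSeries.X + PowerSeries.C b := by
    rw [hGdef]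
    linear_combination W * hder + (DU * W^2) * hV'
      + ((2 * PowerSeries.X + PowerSeries.C b) - DU * W * Q) * hUW
  have hDq' : D (2 * PowerSeries.X + PowerSeries.C b) = 2 := by
    rw [map_add, hDC, add_zero, Derivation.leibniz, hDX, hD2]
    simp [smul_eq_mul]
  have hG2 : V * D G + G * DV = 2 := by
    have h0 : D (V * G) = D (2 * PowerSeries.X + PowerSeries.C b) := by rw [hG]
    rw [hDq'] at h0
    rw [Derivation.leibniz] at h0
    simp only [smul_eq_mul] at h0
    linear_combination h0
  -- Now show ρ = 0 by proving it in every quotient R/lowZero (N+2)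
  have hρ0 : ρ = 0 := by
    apply eq_zero_of_forall_lowZero
    intro N
    set I : Ideal (MvPowerSeries σ ℂ) := lowZero σ ℂ (N + 2) with hI
    set φ : MvPowerSeries σ ℂ →+* (MvPowerSeries σ ℂ ⧸ I) := Ideal.Quotient.mk I with hφdef
    have haM : (φ τ) ^ (N + 2) = 0 := by
      rw [← map_pow, hφdef]
      exact Ideal.Quotient.eq_zero_iff_mem.2 (mem_lowZero_of_pow hccτ (N + 2))
    have h1M : 1 ≤ N + 2 := by omega
    set ψ : PowerSeries (MvPowerSeries σ ℂ) →+* (MvPowerSeries σ ℂ ⧸ I) :=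
      evalNil φ (φ τ) (N + 2) haM h1M with hψdef
    have hψX : ψ PowerSeries.X = φ τ := by
      rw [hψdef]; exact evalNil_X φ (φ τ) (N + 2) haM h1M (by omega)
    have hψC : ∀ s, ψ (PowerSeries.C s) = φ s := fun s => by
      rw [hψdef]; exact evalNil_C φ (φ τ) (N + 2) haM h1M s
    have e4 : ψ ↑U * ψ W = 1 := by
      rw [← map_mul, hUW, map_one]
    have hψQ : ψ Q = φ ρ := by
      rw [hQdef, map_add, map_add, map_pow, map_mul, hψX, hψC, hψC]
      rw [← map_pow, ← map_mul, ← map_add, ← map_add]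
      congr 1
      rw [hρdef]; ring
    have e2 : ψ ↑U * φ ρ = (ψ V) ^ 2 := by
      have h0 := congrArg ψ hV'
      rw [map_mul, map_mul, hψQ] at h0
      rw [h0]; ring
    have e1 : ψ V * ψ G = 0 := by
      have h0 := congrArg ψ hG
      simp only [map_mul, map_add, map_ofNat, hψX, hψC] at h0
      have hz : (2 : MvPowerSeries σ ℂ ⧸ I) * φ τ + φ b = 0 := by
        rw [show (2 : MvPowerSeries σ ℂ ⧸ I) = φ (2 : MvPowerSeries σ ℂ) from
          (map_ofNat φ 2).symm, ← map_mul, ← map_add,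
          show (2 : MvPowerSeries σ ℂ) * τ + b = 0 from by
            rw [hτdef]; linear_combination (-b) * h2,
          map_zero]
      rw [hz] at h0
      exact h0
    have e3 : ψ V * ψ (D G) + ψ G * ψ DV = 2 := by
      have h0 := congrArg ψ hG2
      simp only [map_mul, map_add, map_ofNat] at h0
      exact h0
    have s1 : 2 * ψ V = ψ ↑U * φ ρ * ψ (D G) := by
      linear_combination (-(ψ V)) * e3 + (-(ψ (D G))) * e2 + (ψ DV) * e1
    have s2 : (4 : MvPowerSeries σ ℂ ⧸ I) * φ ρ = ψ ↑U * (ψ (D G))^2 * (φ ρ)^2 := by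
      linear_combination (ψ W * (2 * ψ V + ψ ↑U * φ ρ * ψ (D G))) * s1
        + (4 * ψ W) * e2 + (ψ ↑U * (φ ρ)^2 * (ψ (D G))^2 - 4 * φ ρ) * e4
    have nilρ : IsNilpotent (φ ρ) := ⟨N + 2, by
      rw [← map_pow, hφdef]
      exact Ideal.Quotient.eq_zero_iff_mem.2 (mem_lowZero_of_pow hccρ (N + 2))⟩
    have niln : IsNilpotent (ψ ↑U * (ψ (D G))^2 * φ ρ) :=
      (Commute.all _ _).isNilpotent_mul_left nilρ
    have h4 : IsUnit (4 : MvPowerSeries σ ℂ ⧸ I) := by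
      have h4R : IsUnit (4 : MvPowerSeries σ ℂ) :=
        IsUnit.of_mul_eq_one (MvPowerSeries.C (4⁻¹ : ℂ)) (by
          rw [show (4 : MvPowerSeries σ ℂ) = MvPowerSeries.C (4 : ℂ) from
            (map_ofNat _ 4).symm, ← map_mul]
          norm_num)
      have := h4R.map φ
      rwa [map_ofNat] at this
    have hunit : IsUnit ((4 : MvPowerSeries σ ℂ ⧸ I) - ψ ↑U * (ψ (D G))^2 * φ ρ) := by
      have := (niln.neg).isUnit_add_left_of_commute h4 (Commute.all _ _)
      rwa [← sub_eq_add_neg] at this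
    have hmul : ((4 : MvPowerSeries σ ℂ ⧸ I) - ψ ↑U * (ψ (D G))^2 * φ ρ) * φ ρ
        = ((4 : MvPowerSeries σ ℂ ⧸ I) - ψ ↑U * (ψ (D G))^2 * φ ρ) * 0 := by
      rw [mul_zero]; linear_combination s2
    have : φ ρ = 0 := hunit.mul_left_cancel hmul
    rw [hφdef] at this
    exact Ideal.Quotient.eq_zero_iff_mem.1 this
  rw [hρdef, hτdef] at hρ0
  linear_combination (-4 : MvPowerSeries σ ℂ) * hρ0 + (b^2 * (2 * half - 1)) * h2


lemma backward {σ : Type*} (b c : MvPowerSeries σ ℂ)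
    (U : (PowerSeries (MvPowerSeries σ ℂ))ˣ)
    (h : b ^ 2 - 4 * c = 0) :
    ∃ V : PowerSeries (MvPowerSeries σ ℂ),
        (U : PowerSeries (MvPowerSeries σ ℂ)) *
          (PowerSeries.X ^ 2 + PowerSeries.C b * PowerSeries.X + PowerSeries.C c)
          = V ^ 2 := by
  -- square root of the constant coefficient (a unit of ℂ[[s]])
  have hu0 : IsUnit (PowerSeries.constantCoeff (U : PowerSeries (MvPowerSeries σ ℂ))) :=
    U.isUnit.map (PowerSeries.constantCoeff (R := MvPowerSeries σ ℂ))
  have hα : IsUnit (MvPowerSeries.constantCoeff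
      (PowerSeries.constantCoeff (U : PowerSeries (MvPowerSeries σ ℂ)))) :=
    hu0.map (MvPowerSeries.constantCoeff (σ := σ) (R := ℂ))
  obtain ⟨β, hβ⟩ := IsAlgClosed.exists_pow_nat_eq
    (MvPowerSeries.constantCoeff (PowerSeries.constantCoeff (U : PowerSeries (MvPowerSeries σ ℂ))))
    (n := 2) (by omega)
  have hβne : β ≠ 0 := by
    intro h0
    rw [h0] at hβ
    simp at hβ
    exact (isUnit_iff_ne_zero.1 hα) hβ.symm
  obtain ⟨w0, hw0, hw0c⟩ := sqrt_exists (σ := σ) (S := ℂ)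
    (PowerSeries.constantCoeff (U : PowerSeries (MvPowerSeries σ ℂ))) β
    (by rw [← hβ]; ring) (isUnit_iff_ne_zero.2 (mul_ne_zero two_ne_zero hβne))
  have h2w0 : IsUnit ((2 : MvPowerSeries σ ℂ) * w0) := by
    rw [MvPowerSeries.isUnit_iff_constantCoeff, map_mul, map_ofNat, hw0c]
    exact isUnit_iff_ne_zero.2 (mul_ne_zero two_ne_zero hβne)
  obtain ⟨W, hW, -⟩ := sqrt_exists (σ := Unit) (S := MvPowerSeries σ ℂ)
    ((U : PowerSeries (MvPowerSeries σ ℂ)) : MvPowerSeries Unit (MvPowerSeries σ ℂ)) w0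
    (by exact hw0.symm) h2w0
  have hW' : (W : PowerSeries (MvPowerSeries σ ℂ)) * W = ↑U := hW
  -- complete the square
  set half : MvPowerSeries σ ℂ := MvPowerSeries.C (2⁻¹ : ℂ) with hhalf
  have h2 : (2 : MvPowerSeries σ ℂ) * half = 1 := by
    rw [hhalf, show (2 : MvPowerSeries σ ℂ) = MvPowerSeries.C (2 : ℂ) from
      (map_ofNat _ 2).symm, ← map_mul]
    norm_num
  set CR := PowerSeries.C (R := MvPowerSeries σ ℂ) with hCR
  have hA : (2 : PowerSeries (MvPowerSeries σ ℂ)) * CR half = 1 := by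
    rw [show (2 : PowerSeries (MvPowerSeries σ ℂ)) = CR (2 : MvPowerSeries σ ℂ) from
      (map_ofNat _ 2).symm, ← map_mul, h2, map_one]
  have hB : CR b * CR b = 4 * CR c := by
    rw [← map_mul, show (4 : PowerSeries (MvPowerSeries σ ℂ)) = CR (4 : MvPowerSeries σ ℂ) from
      (map_ofNat _ 4).symm, ← map_mul]
    congr 1
    linear_combination h
  refine ⟨(W : PowerSeries (MvPowerSeries σ ℂ)) * (PowerSeries.X + CR half * CR b), ?_⟩
  linear_combination (-(PowerSeries.X + CR half * CR b)^2) * hW'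
    + (-((U : PowerSeries (MvPowerSeries σ ℂ)) *
        (PowerSeries.X * CR b + CR c * (2 * CR half + 1)))) * hA
    + (-((U : PowerSeries (MvPowerSeries σ ℂ)) * (CR half)^2)) * hB

end Stmt5Aux

/-- Let `R = ℂ[[s₁,…,s_r]]`, let `b c ∈ R` have zero constant coefficient and let
`U` be a unit of `R[[t]]`.  Then `U·(t² + b·t + c)` is a square in `R[[t]]` iff
`b² - 4c = 0`. -/
theorem stmt_5 (r : ℕ) (b c : MvPowerSeries (Fin r) ℂ)
    (hb : MvPowerSeries.constantCoeff b = 0)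
    (hc : MvPowerSeries.constantCoeff c = 0)
    (U : (PowerSeries (MvPowerSeries (Fin r) ℂ))ˣ) :
    (∃ V : PowerSeries (MvPowerSeries (Fin r) ℂ),
        (U : PowerSeries (MvPowerSeries (Fin r) ℂ)) *
          (PowerSeries.X ^ 2 + PowerSeries.C b * PowerSeries.X + PowerSeries.C c)
          = V ^ 2) ↔
      b ^ 2 - 4 * c = 0 := by
  constructor
  · rintro ⟨V, hV⟩
    exact Stmt5Aux.forward b c hb hc U V hV
  · intro h
    exact Stmt5Aux.backward b c U h
end

section
/- Let n ≥ 1 and let e ≥ 2n be an integer. There exists a nonzero homogeneous polynomial G of degree e in the variables x₀,…,x_{n+1} over ℂ such that no 2-dimensional ℂ-linear subspace of ℂ^{n+2} is contained in the zero set of G. -/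
open MeasureTheory Module

noncomputable section LineFreeAux

namespace LineFreeAux

/-- Index type for the spanning family of monomials `X i ^ (e - r) * X j ^ r`. -/
abbrev Idx (m e : ℕ) := Fin m × Fin m × Fin (e + 1)

/-- The monomial `X_{x.1}^{e-r} X_{x.2.1}^{r}` where `r = x.2.2`. -/
def gmono (m e : ℕ) (x : Idx m e) : MvPolynomial (Fin m) ℂ :=
  MvPolynomial.X x.1 ^ (e - (x.2.2 : ℕ)) * MvPolynomial.X x.2.1 ^ (x.2.2 : ℕ)

/-- The polynomial with coefficient vector `c`. -/
def gpoly (m e : ℕ) (c : Idx m e → ℂ) : MvPolynomial (Fin m) ℂ :=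
  ∑ x : Idx m e, MvPolynomial.C (c x) * gmono m e x

lemma eval_gpoly (m e : ℕ) (c : Idx m e → ℂ) (p : Fin m → ℂ) :
    MvPolynomial.eval p (gpoly m e c) =
      ∑ x : Idx m e, c x * (p x.1 ^ (e - (x.2.2 : ℕ)) * p x.2.1 ^ (x.2.2 : ℕ)) := by
  simp [gpoly, gmono]

/-- The index set of coordinates other than `i, j`. -/
abbrev SIdx (m : ℕ) (i j : Fin m) := {k : Fin m // k ≠ i ∧ k ≠ j}

/-- The non-block indices. -/
abbrev RIdx (m e : ℕ) (i j : Fin m) := {x : Idx m e // ¬(x.1 = i ∧ x.2.1 = j)}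

/-- A point of the normalized plane with parameters `a`, at parameter value `(1, q)`. -/
def planePt (m : ℕ) (i j : Fin m) (a : SIdx m i j → ℂ × ℂ) (q : ℂ) : Fin m → ℂ :=
  fun k =>
    if h1 : k = i then 1
    else if h2 : k = j then q
    else (a ⟨k, h1, h2⟩).1 + q * (a ⟨k, h1, h2⟩).2

lemma planePt_fst (m : ℕ) (i j : Fin m) (a : SIdx m i j → ℂ × ℂ) (q : ℂ) :
    planePt m i j a q i = 1 := by simp [planePt]

lemma planePt_snd (m : ℕ) (i j : Fin m) (hij : i ≠ j) (a : SIdx m i j → ℂ × ℂ) (q : ℂ) :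
    planePt m i j a q j = q := by simp [planePt, hij.symm]

/-- The contribution of the non-block coefficients at the sample point `q`. -/
def wvec (m e : ℕ) (i j : Fin m) (a : SIdx m i j → ℂ × ℂ) (c' : RIdx m e i j → ℂ)
    (q : Fin (e + 1)) : ℂ :=
  ∑ x : RIdx m e i j, c' x *
    (planePt m i j a ((q : ℕ) : ℂ) x.1.1 ^ (e - (x.1.2.2 : ℕ)) *
      planePt m i j a ((q : ℕ) : ℂ) x.1.2.1 ^ (x.1.2.2 : ℕ))

/-- Vandermonde matrix at the sample points `0, 1, ..., e`. -/
def vanV (e : ℕ) : Matrix (Fin (e + 1)) (Fin (e + 1)) ℂ :=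
  Matrix.vandermonde fun q : Fin (e + 1) => ((q : ℕ) : ℂ)

lemma vanV_det_ne_zero (e : ℕ) : (vanV e).det ≠ 0 := by
  rw [vanV, Matrix.det_vandermonde_ne_zero_iff]
  intro q1 q2 hq
  exact Fin.ext (Nat.cast_injective hq)

/-- The solved-for block coefficients. -/
def solveC (m e : ℕ) (i j : Fin m) (a : SIdx m i j → ℂ × ℂ) (c' : RIdx m e i j → ℂ) :
    Fin (e + 1) → ℂ :=
  (vanV e)⁻¹.mulVec fun q => -(wvec m e i j a c' q)

/-- The parametrization of coefficient vectors vanishing on the normalized plane. -/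
def psiMap (m e : ℕ) (i j : Fin m) (a : SIdx m i j → ℂ × ℂ) (c' : RIdx m e i j → ℂ) :
    Idx m e → ℂ :=
  fun x => if h : x.1 = i ∧ x.2.1 = j then solveC m e i j a c' x.2.2 else c' ⟨x, h⟩

/-- Equivalence between `Fin (e+1)` and the block. -/
def blockEquiv (m e : ℕ) (i j : Fin m) :
    Fin (e + 1) ≃ {x : Idx m e // x.1 = i ∧ x.2.1 = j} where
  toFun r := ⟨(i, j, r), rfl, rfl⟩
  invFun x := x.1.2.2
  left_inv r := rfl
  right_inv := by
    rintro ⟨⟨x1, x2, x3⟩, h1, h2⟩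
    dsimp at h1 h2
    subst h1; subst h2; rfl

lemma key_identity (m e : ℕ) (i j : Fin m) (hij : i ≠ j) (c : Idx m e → ℂ)
    (a : SIdx m i j → ℂ × ℂ) (q : Fin (e + 1)) :
    MvPolynomial.eval (planePt m i j a ((q : ℕ) : ℂ)) (gpoly m e c) =
      (vanV e).mulVec (fun r => c (i, j, r)) q +
        wvec m e i j a (fun x => c x.1) q := by
  rw [eval_gpoly]
  rw [← Fintype.sum_subtype_add_sum_subtype (fun x : Idx m e => x.1 = i ∧ x.2.1 = j)
    (fun x : Idx m e => c x * (planePt m i j a ((q : ℕ) : ℂ) x.1 ^ (e - (x.2.2 : ℕ)) *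
      planePt m i j a ((q : ℕ) : ℂ) x.2.1 ^ (x.2.2 : ℕ)))]
  congr 1
  · rw [← Equiv.sum_comp (blockEquiv m e i j)]
    simp only [blockEquiv, Equiv.coe_fn_mk]
    rw [Matrix.mulVec, dotProduct]
    refine Finset.sum_congr rfl fun r _ => ?_
    simp only [vanV, Matrix.vandermonde, planePt_fst, planePt_snd m i j hij, one_pow, one_mul]
    rw [Matrix.of_apply]
    ring

lemma eq_psiMap (m e : ℕ) (i j : Fin m) (hij : i ≠ j) (c : Idx m e → ℂ)
    (a : SIdx m i j → ℂ × ℂ)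
    (h : ∀ q : Fin (e + 1),
      MvPolynomial.eval (planePt m i j a ((q : ℕ) : ℂ)) (gpoly m e c) = 0) :
    c = psiMap m e i j a (fun x => c x.1) := by
  have hb : (vanV e).mulVec (fun r => c (i, j, r)) =
      fun q => -(wvec m e i j a (fun x => c x.1) q) := by
    funext q
    have hk := key_identity m e i j hij c a q
    rw [h q] at hk
    exact eq_neg_of_add_eq_zero_left hk.symm
  have hVinv : (vanV e)⁻¹ * vanV e = 1 :=
    Matrix.nonsing_inv_mul _ (isUnit_iff_ne_zero.mpr (vanV_det_ne_zero e))
  funext x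
  by_cases hx : x.1 = i ∧ x.2.1 = j
  · obtain ⟨x1, x2, x3⟩ := x
    obtain ⟨h1, h2⟩ := hx
    dsimp at h1 h2
    subst h1; subst h2
    show c (x1, x2, x3) = psiMap m e x1 x2 a (fun x => c x.1) (x1, x2, x3)
    rw [psiMap, dif_pos ⟨rfl, rfl⟩]
    rw [solveC, ← hb, Matrix.mulVec_mulVec, hVinv, Matrix.one_mulVec]
  · rw [psiMap, dif_neg hx]

/-- The domain of the parametrization. -/
abbrev Dom (m e : ℕ) (i j : Fin m) := (SIdx m i j → ℂ × ℂ) × (RIdx m e i j → ℂ)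

def bigPsi (m e : ℕ) (i j : Fin m) (p : Dom m e i j) : Idx m e → ℂ :=
  psiMap m e i j p.1 p.2

lemma diff_planePt (m : ℕ) (i j : Fin m) (q : ℂ) (k : Fin m) :
    Differentiable ℂ (fun a : SIdx m i j → ℂ × ℂ => planePt m i j a q k) := by
  unfold planePt
  by_cases h1 : k = i
  · simp only [dif_pos h1]; exact differentiable_const _
  · simp only [dif_neg h1]
    by_cases h2 : k = j
    · simp only [dif_pos h2]; exact differentiable_const _
    · simp only [dif_neg h2]
      have ha : Differentiable ℂ (fun a : SIdx m i j → ℂ × ℂ => a ⟨k, h1, h2⟩) :=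
        (ContinuousLinearMap.proj (R := ℂ) (φ := fun _ : SIdx m i j => ℂ × ℂ)
          ⟨k, h1, h2⟩).differentiable
      exact ha.fst.add ((differentiable_const q).mul ha.snd)

lemma diff_bigPsi (m e : ℕ) (i j : Fin m) : Differentiable ℝ (bigPsi m e i j) := by
  have hC : Differentiable ℂ (bigPsi m e i j) := by
    rw [differentiable_pi]
    intro x
    unfold bigPsi psiMap
    by_cases hx : x.1 = i ∧ x.2.1 = j
    · simp only [dif_pos hx]
      unfold solveC
      simp only [Matrix.mulVec, dotProduct]
      apply Differentiable.fun_sum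
      intro q _
      have hw : Differentiable ℂ (fun p : Dom m e i j => wvec m e i j p.1 p.2 q) := by
        unfold wvec
        apply Differentiable.fun_sum
        intro y _
        have hc' : Differentiable ℂ (fun p : Dom m e i j => p.2 y) := by
          have := (ContinuousLinearMap.proj (R := ℂ) (φ := fun _ : RIdx m e i j => ℂ)
            y).differentiable
          exact this.comp differentiable_snd
        exact hc'.mul
          ((((diff_planePt m i j _ y.1.1).comp differentiable_fst).pow _).mul
            (((diff_planePt m i j _ y.1.2.1).comp differentiable_fst).pow _))
      exact (hw.neg).const_mul _
    · simp only [dif_neg hx]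
      have := (ContinuousLinearMap.proj (R := ℂ) (φ := fun _ : RIdx m e i j => ℂ)
        (⟨x, hx⟩ : RIdx m e i j)).differentiable
      exact this.comp differentiable_snd
  exact hC.restrictScalars ℝ

lemma card_SIdx (m : ℕ) (i j : Fin m) (hij : i ≠ j) :
    Fintype.card (SIdx m i j) = m - 2 := by
  have h1 : Fintype.card (SIdx m i j) = Fintype.card {k : Fin m // ¬(k = i ∨ k = j)} :=
    Fintype.card_congr (Equiv.subtypeEquivRight (by tauto))
  rw [h1, Fintype.card_subtype_compl]
  have h2 : Fintype.card {k : Fin m // k = i ∨ k = j} =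
      Fintype.card ({i, j} : Finset (Fin m)) :=
    Fintype.card_congr (Equiv.subtypeEquivRight (by simp))
  rw [h2, Fintype.card_coe, Finset.card_insert_of_notMem (by simp [hij]),
    Finset.card_singleton, Fintype.card_fin]

lemma card_RIdx (m e : ℕ) (i j : Fin m) :
    Fintype.card (RIdx m e i j) = m * m * (e + 1) - (e + 1) := by
  rw [Fintype.card_subtype_compl]
  have h2 : Fintype.card {x : Idx m e // x.1 = i ∧ x.2.1 = j} = e + 1 := by
    have hcc := Fintype.card_congr (blockEquiv m e i j)
    rw [Fintype.card_fin] at hcc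
    exact hcc.symm
  rw [h2]
  congr 1
  simp [Fintype.card_prod, Fintype.card_fin, Nat.mul_assoc]

lemma null_range (m e : ℕ) (i j : Fin m) (μ : Measure (Idx m e → ℂ))
    [μ.IsAddHaarMeasure] (hij : i ≠ j) (hdim : 2 * (m - 2) < e + 1) :
    μ (Set.range (bigPsi m e i j)) = 0 := by
  classical
  -- dimension bookkeeping
  have hm2 : 2 ≤ m := by
    rcases Nat.lt_or_ge m 2 with h | h
    · interval_cases m
      · exact absurd i.2 (by omega)
      · exact absurd hij (by omega)
    · exact h
  have hE : finrank ℝ (Idx m e → ℂ) = m * m * (e + 1) * 2 := by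
    rw [finrank_pi_fintype ℝ]
    simp [Complex.finrank_real_complex, Finset.sum_const, Fintype.card_prod, mul_assoc]
  have hD : finrank ℝ (Dom m e i j) = (m - 2) * 4 + (m * m * (e + 1) - (e + 1)) * 2 := by
    rw [finrank_prod, finrank_pi_fintype ℝ, finrank_pi_fintype ℝ]
    have h4 : finrank ℝ (ℂ × ℂ) = 4 := by
      rw [finrank_prod, Complex.finrank_real_complex]
    simp only [h4, Complex.finrank_real_complex, Finset.sum_const, Finset.card_univ,
      smul_eq_mul]
    rw [card_SIdx m i j hij, card_RIdx m e i j]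
  have hlt : finrank ℝ (Dom m e i j) < finrank ℝ (Idx m e → ℂ) := by
    rw [hE, hD]
    have hK : e + 1 ≤ m * m * (e + 1) := by
      have : 1 ≤ m * m := by nlinarith
      nlinarith
    omega
  -- surjective linear map from the big space onto the domain
  obtain ⟨L, hLsurj⟩ : ∃ L : (Idx m e → ℂ) →ₗ[ℝ] Dom m e i j, Function.Surjective L := by
    refine ⟨((Module.finBasis ℝ (Dom m e i j)).equivFun.symm.toLinearMap.comp
      (LinearMap.funLeft ℝ ℝ (Fin.castLE hlt.le))).comp
      (Module.finBasis ℝ (Idx m e → ℂ)).equivFun.toLinearMap, ?_⟩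
    simp only [LinearMap.coe_comp, LinearEquiv.coe_coe]
    exact (((Module.finBasis ℝ (Dom m e i j)).equivFun.symm.surjective.comp
      (LinearMap.funLeft_surjective_of_injective ℝ ℝ _ (Fin.castLE_injective _)))).comp
      (Module.finBasis ℝ (Idx m e → ℂ)).equivFun.surjective
  have hLninj : ¬ Function.Injective L := by
    intro hLinj
    have := LinearMap.finrank_le_finrank_of_injective hLinj
    omega
  set F : (Idx m e → ℂ) → (Idx m e → ℂ) := fun x => bigPsi m e i j (L x) with hF
  let Lc : (Idx m e → ℂ) →L[ℝ] Dom m e i j := LinearMap.toContinuousLinearMap L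
  have hdiff := diff_bigPsi m e i j
  set f' : (Idx m e → ℂ) → (Idx m e → ℂ) →L[ℝ] (Idx m e → ℂ) :=
    fun x => (fderiv ℝ (bigPsi m e i j) (L x)).comp Lc with hf'
  have hFd : ∀ x, HasFDerivAt F (f' x) x := by
    intro x
    have h1 : HasFDerivAt (bigPsi m e i j) (fderiv ℝ (bigPsi m e i j) (L x)) (Lc x) :=
      (hdiff (L x)).hasFDerivAt
    exact h1.comp x Lc.hasFDerivAt
  have hdet : ∀ x, (f' x).det = 0 := by
    intro x
    by_contra hne
    apply hLninj
    have hU : IsUnit (LinearMap.toMatrix (Module.finBasis ℝ (Idx m e → ℂ))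
        (Module.finBasis ℝ (Idx m e → ℂ))
        ((f' x) : (Idx m e → ℂ) →ₗ[ℝ] (Idx m e → ℂ))).det := by
      rw [LinearMap.det_toMatrix]
      exact isUnit_iff_ne_zero.2 hne
    have hEq := LinearEquiv.coe_ofIsUnitDet hU
    have hinj : Function.Injective (f' x) := by
      intro z1 z2 hz
      apply (LinearEquiv.ofIsUnitDet hU).injective
      have e1 := LinearMap.congr_fun hEq z1
      have e2 := LinearMap.congr_fun hEq z2
      rw [LinearEquiv.coe_coe] at e1 e2
      rw [e1, e2]
      exact hz
    intro z1 z2 hz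
    apply hinj
    have hzz : Lc z1 = Lc z2 := hz
    show (f' x) z1 = (f' x) z2
    rw [hf']
    simp only [ContinuousLinearMap.coe_comp', Function.comp_apply]
    rw [hzz]
  have himg := addHaar_image_eq_zero_of_det_fderivWithin_eq_zero μ
    (s := Set.univ) (f := F) (f' := f')
    (fun x _ => (hFd x).hasFDerivWithinAt) (fun x _ => hdet x)
  rw [Set.image_univ] at himg
  have hr : Set.range (bigPsi m e i j) = Set.range F := by
    rw [hF]
    rw [show (fun x => bigPsi m e i j (L x)) = bigPsi m e i j ∘ ⇑L from rfl,
      Set.range_comp, hLsurj.range_eq, Set.image_univ]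
  rw [hr]
  exact himg

/-- Normalized vectors in a 2-dimensional subspace. -/
lemma exists_norm {m : ℕ} (W : Subspace ℂ (Fin m → ℂ)) (hW : finrank ℂ W = 2) :
    ∃ (i j : Fin m), i ≠ j ∧ ∃ u v : Fin m → ℂ, u ∈ W ∧ v ∈ W ∧
      u i = 1 ∧ u j = 0 ∧ v i = 0 ∧ v j = 1 := by
  have hWbot : W ≠ ⊥ := by
    intro h
    rw [h, finrank_bot] at hW
    omega
  obtain ⟨w, hwW, hw0⟩ := Submodule.exists_mem_ne_zero_of_ne_bot hWbot
  obtain ⟨i, hwi⟩ : ∃ i, w i ≠ 0 := by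
    by_contra h
    push_neg at h
    exact hw0 (funext h)
  set f : W →ₗ[ℂ] ℂ := (LinearMap.proj i).comp W.subtype with hf
  have hker : LinearMap.ker f ≠ ⊥ := by
    intro hk
    have hinj := LinearMap.ker_eq_bot.mp hk
    have hle := LinearMap.finrank_le_finrank_of_injective hinj
    rw [hW, finrank_self] at hle
    omega
  obtain ⟨v0, hv0mem, hv0ne⟩ := Submodule.exists_mem_ne_zero_of_ne_bot hker
  have hv0i : (v0 : Fin m → ℂ) i = 0 := LinearMap.mem_ker.mp hv0mem
  obtain ⟨j, hv0j⟩ : ∃ j, (v0 : Fin m → ℂ) j ≠ 0 := by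
    by_contra h
    push_neg at h
    exact hv0ne (Subtype.ext (funext h))
  have hji : j ≠ i := by
    intro h
    rw [h, hv0i] at hv0j
    exact hv0j rfl
  set v : Fin m → ℂ := ((v0 : Fin m → ℂ) j)⁻¹ • (v0 : Fin m → ℂ) with hv
  set u0 : Fin m → ℂ := (w i)⁻¹ • w with hu0
  set u : Fin m → ℂ := u0 - u0 j • v with hu
  have hvW : v ∈ W := W.smul_mem _ (SetLike.coe_mem v0)
  have hu0W : u0 ∈ W := W.smul_mem _ hwW
  have huW : u ∈ W := W.sub_mem hu0W (W.smul_mem _ hvW)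
  have hvi : v i = 0 := by simp [hv, hv0i]
  have hvj : v j = 1 := by
    simp only [hv, Pi.smul_apply, smul_eq_mul]
    exact inv_mul_cancel₀ hv0j
  have hui : u i = 1 := by
    simp only [hu, Pi.sub_apply, Pi.smul_apply, smul_eq_mul, hvi, mul_zero, sub_zero, hu0]
    exact inv_mul_cancel₀ hwi
  have huj : u j = 0 := by
    simp [hu, hvj]
  exact ⟨i, j, hji.symm, u, v, huW, hvW, hui, huj, hvi, hvj⟩

lemma gpoly_homogeneous (m e : ℕ) (c : Idx m e → ℂ) :
    (gpoly m e c).IsHomogeneous e := by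
  apply MvPolynomial.IsHomogeneous.sum
  intro x _
  have h1 := (MvPolynomial.isHomogeneous_X ℂ x.1).pow (e - (x.2.2 : ℕ))
  have h2 := (MvPolynomial.isHomogeneous_X ℂ x.2.1).pow (x.2.2 : ℕ)
  have h4 := (MvPolynomial.isHomogeneous_C (Fin m) (c x)).mul (h1.mul h2)
  have hle : (x.2.2 : ℕ) ≤ e := Fin.is_le x.2.2
  have : 0 + (1 * (e - (x.2.2 : ℕ)) + 1 * (x.2.2 : ℕ)) = e := by omega
  rw [this] at h4
  exact h4

end LineFreeAux

end LineFreeAux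

open LineFreeAux MeasureTheory Module in
/-- For every `e ≥ 2n` there is a smooth-degree witness: a nonzero homogeneous
polynomial `G` of degree `e` in `n + 2` variables over `ℂ` vanishing on no
2-dimensional linear subspace of `ℂ^{n+2}` (i.e. the hypersurface `(G = 0) ⊂ ℙ^{n+1}`
contains no line). -/
theorem stmt_11 (n e : ℕ) (hn : 1 ≤ n) (he : 2 * n ≤ e) :
    ∃ G : MvPolynomial (Fin (n + 2)) ℂ, G ≠ 0 ∧ G.IsHomogeneous e ∧
      ∀ W : Subspace ℂ (Fin (n + 2) → ℂ), Module.finrank ℂ W = 2 →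
        ∃ x ∈ W, MvPolynomial.eval x G ≠ 0 := by
  classical
  set m := n + 2 with hm
  have hdim : 2 * (m - 2) < e + 1 := by omega
  set μ : Measure (Idx m e → ℂ) := (Module.finBasis ℝ (Idx m e → ℂ)).addHaar with hμ
  set Bad : Set (Idx m e → ℂ) :=
    ⋃ (p : Fin m × Fin m) (_ : p.1 ≠ p.2), Set.range (bigPsi m e p.1 p.2) with hBadDef
  have hBadNull : μ Bad = 0 := by
    apply measure_iUnion_null
    intro p
    apply measure_iUnion_null
    intro hp
    exact null_range m e p.1 p.2 μ hp hdim
  have hμuniv : μ Set.univ ≠ 0 :=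
    (isOpen_univ.measure_pos μ Set.univ_nonempty).ne'
  obtain ⟨c, hc⟩ : ∃ c : Idx m e → ℂ, c ∉ Bad := by
    by_contra h
    push_neg at h
    apply hμuniv
    have : (Set.univ : Set (Idx m e → ℂ)) ⊆ Bad := fun x _ => h x
    exact le_antisymm (le_trans (measure_mono this) (le_of_eq hBadNull)) (zero_le)
  have hmemBad : ∀ (i j : Fin m) (hij : i ≠ j) (a : SIdx m i j → ℂ × ℂ),
      (∀ q : Fin (e + 1),
        MvPolynomial.eval (planePt m i j a ((q : ℕ) : ℂ)) (gpoly m e c) = 0) → False := by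
    intro i j hij a hq
    apply hc
    rw [hBadDef]
    apply Set.mem_iUnion.mpr
    refine ⟨(i, j), Set.mem_iUnion.mpr ⟨hij, ?_⟩⟩
    exact ⟨(a, fun x => c x.1), (eq_psiMap m e i j hij c a hq).symm⟩
  have h01 : (0 : Fin m) ≠ 1 := by
    simp [hm, Fin.ext_iff]
  refine ⟨gpoly m e c, ?_, gpoly_homogeneous m e c, ?_⟩
  · intro h0
    apply hmemBad 0 1 h01 (fun _ => 0)
    intro q
    rw [h0]
    simp
  · intro W hW
    by_contra h
    push_neg at h
    obtain ⟨i, j, hij, u, v, huW, hvW, hui, huj, hvi, hvj⟩ := exists_norm W hW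
    set a : SIdx m i j → ℂ × ℂ := fun k => (u k.1, v k.1) with ha
    have hpt : ∀ q : ℂ, planePt m i j a q = u + q • v := by
      intro q
      funext k
      rw [planePt]
      by_cases h1 : k = i
      · subst h1
        simp [hui, hvi]
      · rw [dif_neg h1]
        by_cases h2 : k = j
        · subst h2
          simp [huj, hvj]
        · rw [dif_neg h2]
          simp [ha]
    apply hmemBad i j hij a
    intro q
    rw [hpt]
    exact h _ (W.add_mem huW (W.smul_mem _ hvW))
end
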